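/- Let I = {0,1}^ℕ and let G = ⊕_{i∈I} ℤ be the direct sum of I copies of ℤ, with a_i denoting the generator of the i-th summand. Then: (a) for each n ∈ ℕ there exists a positive cone P_n of G such that for every i ∈ I, a_i ∈ P_n if i(n) = 1 and a_i⁻¹ ∈ P_n if i(n) = 0; and (b) any sequence (P_n)_{n∈ℕ} of positive cones of G satisfying these conditions has no convergent subsequence in LO(G). In particular, LO(G) is not sequentially compact. -/

import Mathlib

namespace Paper

/-- A positive cone of an additive group `A`: `P + P ⊆ P` and `P ∪ (−P) = A ∖ {0}`. -/
def IsPositiveConeAdd {A : Type*} [AddGroup A] (P : Set A) : Prop :=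
  (∀ a ∈ P, ∀ b ∈ P, a + b ∈ P) ∧ (P ∪ (-P) = {g : A | g ≠ 0})

/-- The index set `I = {0,1}^ℕ`. -/
abbrev IndexSet : Type := ℕ → Bool

/-- `G = ⊕_{i ∈ I} ℤ`, the direct sum of `I` copies of `ℤ`. -/
abbrev DirSumG : Type := DirectSum IndexSet (fun _ => ℤ)

open Classical in
/-- The generator `a_i` of the `i`-th summand. -/
noncomputable def gen (i : IndexSet) : DirSumG := DirectSum.of (fun _ => ℤ) i 1

/-- The space `LO(G)` of positive cones of `G`, encoded by characteristic functions and
given the subspace topology from the product topology on `{0,1}^G`. -/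
abbrev LOSpace (A : Type*) [AddGroup A] : Type _ :=
  {χ : A → Bool // IsPositiveConeAdd {g : A | χ g = true}}

/-- The positive cone corresponding to a point of `LO(G)`. -/
def coneOf {A : Type*} [AddGroup A] (P : LOSpace A) : Set A := {g : A | P.1 g = true}

/-! Auxiliary development -/

/-! Auxiliary development -/

/-- A well-order on the index set. -/
def ilt : IndexSet → IndexSet → Prop := WellOrderingRel

lemma ilt_trans {a b c : IndexSet} (h1 : ilt a b) (h2 : ilt b c) : ilt a c :=
  IsTrans.trans (r := WellOrderingRel) a b c h1 h2

lemma ilt_trichotomy (a b : IndexSet) : ilt a b ∨ a = b ∨ ilt b a :=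
  @trichotomous _ WellOrderingRel _ a b

lemma ilt_irrefl (a : IndexSet) : ¬ ilt a a :=
  Std.Irrefl.irrefl (r := WellOrderingRel) a

lemma ilt_wf : WellFounded ilt := (WellOrderingRel.isWellOrder).toIsWellFounded.wf

/-- The basic positive cone: leading (w.r.t. `ilt`) coefficient positive. -/
def Pos : Set DirSumG := {g | ∃ i, 0 < g i ∧ ∀ j, ilt j i → g j = 0}

lemma Pos_add {g h : DirSumG} (hg : g ∈ Pos) (hh : h ∈ Pos) : g + h ∈ Pos := by
  obtain ⟨i, hi, hil⟩ := hg
  obtain ⟨j, hj, hjl⟩ := hh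
  rcases ilt_trichotomy i j with hij | rfl | hji
  · refine ⟨i, ?_, ?_⟩
    · have : h i = 0 := hjl i hij
      simp [DirectSum.add_apply, this, hi]
    · intro k hk
      simp [DirectSum.add_apply, hil k hk, hjl k (ilt_trans hk hij)]
  · refine ⟨i, ?_, ?_⟩
    · simp only [DirectSum.add_apply]; exact add_pos hi hj
    · intro k hk; simp [DirectSum.add_apply, hil k hk, hjl k hk]
  · refine ⟨j, ?_, ?_⟩
    · have : g j = 0 := hil j hji
      simp [DirectSum.add_apply, this, hj]
    · intro k hk
      simp [DirectSum.add_apply, hjl k hk, hil k (ilt_trans hk hji)]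

lemma Pos_ne_zero {g : DirSumG} (hg : g ∈ Pos) : g ≠ 0 := by
  obtain ⟨i, hi, -⟩ := hg
  intro h0
  rw [h0] at hi
  simp at hi

lemma Pos_union {g : DirSumG} (hg : g ≠ 0) : g ∈ Pos ∨ -g ∈ Pos := by
  classical
  have hne : {i : IndexSet | g i ≠ 0}.Nonempty := by
    by_contra h
    apply hg
    refine DFinsupp.ext fun i => ?_
    have := Set.not_nonempty_iff_eq_empty.mp h
    have hi : g i = 0 := by
      by_contra hi
      exact absurd (Set.mem_setOf_eq ▸ hi : i ∈ {i : IndexSet | g i ≠ 0}) (by simp [this])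
    simpa using hi
  set i0 := ilt_wf.min _ hne with hi0
  have hmem : g i0 ≠ 0 := ilt_wf.min_mem _ hne
  have hlow : ∀ j, ilt j i0 → g j = 0 := by
    intro j hj
    by_contra hjne
    exact ilt_wf.not_lt_min _ hjne hj
  rcases lt_or_gt_of_ne hmem with hneg | hpos
  · right
    exact ⟨i0, by rw [DFinsupp.neg_apply]; omega, fun j hj => by rw [DFinsupp.neg_apply, hlow j hj, neg_zero]⟩
  · left
    exact ⟨i0, hpos, hlow⟩

/-- Sign-flip endomorphism of `ℤ` depending on a bool. -/
def sgnHom (b : Bool) : ℤ →+ ℤ :=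
  AddMonoidHom.mk' (fun x => if b then x else -x) (by intro a b'; cases b <;> simp [neg_add, add_comm])

@[simp] lemma sgnHom_true (x : ℤ) : sgnHom true x = x := rfl
@[simp] lemma sgnHom_false (x : ℤ) : sgnHom false x = -x := rfl

lemma sgnHom_invol (b : Bool) (x : ℤ) : sgnHom b (sgnHom b x) = x := by
  cases b <;> simp

/-- The twist automorphism (as an additive hom). -/
noncomputable def T (n : ℕ) : DirSumG →+ DirSumG :=
  DFinsupp.mapRange.addMonoidHom (fun i => sgnHom (i n))

lemma T_apply (n : ℕ) (g : DirSumG) (i : IndexSet) : T n g i = sgnHom (i n) (g i) := by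
  show (DFinsupp.mapRange (fun i x => sgnHom (i n) x) (fun i => (sgnHom (i n)).map_zero) g) i
    = sgnHom (i n) (g i)
  rw [DFinsupp.mapRange_apply]

lemma T_invol (n : ℕ) (g : DirSumG) : T n (T n g) = g := by
  refine DFinsupp.ext fun i => ?_
  rw [T_apply, T_apply, sgnHom_invol]

lemma T_ne_zero (n : ℕ) {g : DirSumG} (hg : g ≠ 0) : T n g ≠ 0 := by
  intro h
  apply hg
  have := congrArg (T n) h
  rwa [T_invol, map_zero] at this



open Classical in
/-- Characteristic function of the `n`-th twisted cone. -/
noncomputable def chi (n : ℕ) (g : DirSumG) : Bool := decide (T n g ∈ Pos)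

lemma chi_eq (n : ℕ) (g : DirSumG) : chi n g = true ↔ T n g ∈ Pos := by
  simp [chi]

lemma chi_cone (n : ℕ) : IsPositiveConeAdd {g : DirSumG | chi n g = true} := by
  constructor
  · intro a ha b hb
    simp only [Set.mem_setOf_eq, chi_eq] at ha hb ⊢
    rw [map_add]
    exact Pos_add ha hb
  · ext g
    simp only [Set.mem_union, Set.mem_neg, Set.mem_setOf_eq, chi_eq]
    constructor
    · rintro (h | h)
      · exact fun h0 => Pos_ne_zero h (by rw [h0, map_zero])
      · intro h0
        apply Pos_ne_zero h
        rw [h0, neg_zero, map_zero]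
    · intro h0
      rcases Pos_union (T_ne_zero n h0) with h | h
      · exact Or.inl h
      · right
        rwa [map_neg]

noncomputable def PnDef (n : ℕ) : LOSpace DirSumG := ⟨chi n, chi_cone n⟩

lemma gen_apply_same (i : IndexSet) : gen i i = 1 := by
  classical
  simp [gen, DirectSum.of_eq_same]

lemma gen_apply_ne {i j : IndexSet} (h : j ≠ i) : gen i j = 0 := by
  classical
  simp [gen, DirectSum.of_eq_of_ne i j 1 h]

lemma gen_mem_Pos (i : IndexSet) : gen i ∈ Pos :=
  ⟨i, by rw [gen_apply_same]; norm_num,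
    fun j hj => gen_apply_ne (fun e => ilt_irrefl i (e ▸ hj))⟩

lemma T_gen_true {n : ℕ} {i : IndexSet} (h : i n = true) : T n (gen i) = gen i := by
  refine DFinsupp.ext fun j => ?_
  rw [T_apply]
  by_cases hj : j = i
  · subst hj; rw [h, sgnHom_true]
  · rw [gen_apply_ne hj, map_zero]

lemma T_gen_false {n : ℕ} {i : IndexSet} (h : i n = false) : T n (gen i) = -(gen i) := by
  refine DFinsupp.ext fun j => ?_
  rw [T_apply, DFinsupp.neg_apply]
  by_cases hj : j = i
  · subst hj; rw [h, sgnHom_false]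
  · rw [gen_apply_ne hj, map_zero, neg_zero]

lemma PnDef_spec (n : ℕ) (i : IndexSet) :
    (i n = true → gen i ∈ coneOf (PnDef n)) ∧ (i n = false → -(gen i) ∈ coneOf (PnDef n)) := by
  constructor
  · intro h
    show chi n (gen i) = true
    rw [chi_eq, T_gen_true h]
    exact gen_mem_Pos i
  · intro h
    show chi n (-(gen i)) = true
    rw [chi_eq, map_neg, T_gen_false h, neg_neg]
    exact gen_mem_Pos i

lemma not_both {P : LOSpace DirSumG} {g : DirSumG}
    (h1 : g ∈ coneOf P) (h2 : -g ∈ coneOf P) : False := by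
  have h1' : P.1 g = true := h1
  have h2' : P.1 (-g) = true := h2
  have hadd : P.1 (g + -g) = true := P.2.1 g h1' (-g) h2'
  rw [add_neg_cancel] at hadd
  have hm : (0 : DirSumG) ∈ {g : DirSumG | P.1 g = true} ∪ (-{g : DirSumG | P.1 g = true}) :=
    Or.inl hadd
  rw [P.2.2] at hm
  exact hm rfl



open Filter in
theorem stmt14_aux :
    (∃ Pn : ℕ → LOSpace DirSumG, ∀ n : ℕ, ∀ i : IndexSet,
      (i n = true → gen i ∈ coneOf (Pn n)) ∧ (i n = false → -(gen i) ∈ coneOf (Pn n))) ∧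
    (∀ Pn : ℕ → LOSpace DirSumG,
      (∀ n : ℕ, ∀ i : IndexSet,
        (i n = true → gen i ∈ coneOf (Pn n)) ∧ (i n = false → -(gen i) ∈ coneOf (Pn n))) →
      ¬ ∃ (L : LOSpace DirSumG) (φ : ℕ → ℕ), StrictMono φ ∧
          Filter.Tendsto (Pn ∘ φ) Filter.atTop (nhds L)) ∧
    ¬ IsSeqCompact (Set.univ : Set (LOSpace DirSumG)) := by
  classical
  have ha : ∃ Pn : ℕ → LOSpace DirSumG, ∀ n : ℕ, ∀ i : IndexSet,
      (i n = true → gen i ∈ coneOf (Pn n)) ∧ (i n = false → -(gen i) ∈ coneOf (Pn n)) :=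
    ⟨PnDef, PnDef_spec⟩
  have hb : ∀ Pn : ℕ → LOSpace DirSumG,
      (∀ n : ℕ, ∀ i : IndexSet,
        (i n = true → gen i ∈ coneOf (Pn n)) ∧ (i n = false → -(gen i) ∈ coneOf (Pn n))) →
      ¬ ∃ (L : LOSpace DirSumG) (φ : ℕ → ℕ), StrictMono φ ∧
          Filter.Tendsto (Pn ∘ φ) Filter.atTop (nhds L) := by
    rintro Pn hPn ⟨L, φ, hφ, htend⟩
    set iS : IndexSet := fun k => decide (∃ m, φ (2 * m) = k) with hiS
    have hiS_even : ∀ m, iS (φ (2 * m)) = true := fun m => decide_eq_true ⟨m, rfl⟩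
    have hiS_odd : ∀ m, iS (φ (2 * m + 1)) = false := by
      intro m
      apply decide_eq_false
      rintro ⟨m', hm'⟩
      have := hφ.injective hm'
      omega
    have hc : Continuous (fun P : LOSpace DirSumG => P.1 (gen iS)) :=
      (continuous_apply (gen iS)).comp continuous_subtype_val
    have hT : Tendsto (fun k => (Pn (φ k)).1 (gen iS)) atTop (nhds (L.1 (gen iS))) :=
      (hc.tendsto L).comp htend
    have hmem : {L.1 (gen iS)} ∈ nhds (L.1 (gen iS)) :=
      (isOpen_discrete _).mem_nhds rfl
    have hev : ∀ᶠ k in atTop, (Pn (φ k)).1 (gen iS) = L.1 (gen iS) := by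
      filter_upwards [hT hmem] with k hk using hk
    obtain ⟨N, hN⟩ := Filter.eventually_atTop.mp hev
    have h1 : (Pn (φ (2 * N))).1 (gen iS) = true :=
      (hPn (φ (2 * N)) iS).1 (hiS_even N)
    have h2 : -(gen iS) ∈ coneOf (Pn (φ (2 * N + 1))) :=
      (hPn (φ (2 * N + 1)) iS).2 (hiS_odd N)
    have h3 : (Pn (φ (2 * N + 1))).1 (gen iS) ≠ true := by
      intro hmem'
      exact not_both hmem' h2
    have e1 := hN (2 * N) (by omega)
    have e2 := hN (2 * N + 1) (by omega)
    rw [h1] at e1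
    rw [e2, ← e1] at h3
    exact h3 rfl
  refine ⟨ha, hb, ?_⟩
  intro hsc
  obtain ⟨Pn, hPn⟩ := ha
  obtain ⟨L, -, φ, hφ, htend⟩ := hsc (x := Pn) (fun n => Set.mem_univ _)
  exact hb Pn hPn ⟨L, φ, hφ, htend⟩


/-- Example 4.16: (a) for each `n ∈ ℕ` there is a positive cone `P_n` of
`G = ⊕_{i ∈ {0,1}^ℕ} ℤ` with `a_i ∈ P_n` when `i(n) = 1` and `−a_i ∈ P_n` when
`i(n) = 0`; (b) any sequence of positive cones with these properties has no convergent
subsequence in `LO(G)`; in particular `LO(G)` is not sequentially compact. -/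
theorem stmt14 :
    (∃ Pn : ℕ → LOSpace DirSumG, ∀ n : ℕ, ∀ i : IndexSet,
      (i n = true → gen i ∈ coneOf (Pn n)) ∧ (i n = false → -(gen i) ∈ coneOf (Pn n))) ∧
    (∀ Pn : ℕ → LOSpace DirSumG,
      (∀ n : ℕ, ∀ i : IndexSet,
        (i n = true → gen i ∈ coneOf (Pn n)) ∧ (i n = false → -(gen i) ∈ coneOf (Pn n))) →
      ¬ ∃ (L : LOSpace DirSumG) (φ : ℕ → ℕ), StrictMono φ ∧
          Filter.Tendsto (Pn ∘ φ) Filter.atTop (nhds L)) ∧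
    ¬ IsSeqCompact (Set.univ : Set (LOSpace DirSumG)) := by
  exact stmt14_aux

end Paper
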